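/- Let Y be a finite nontrivial minimal obstacle between distinct points y1, y2 in R^d. Then the intersection conv({y1,y2}) ∩ conv(Y) is a singleton. -/

import Mathlib

/-- For a nontrivial minimal obstacle, the intersection of the segment with
the convex hull of the obstacle is a singleton. -/
theorem stmt_7 (d : ℕ) (y1 y2 : Fin d → ℝ) (hne : y1 ≠ y2) (Y : Finset (Fin d → ℝ))
    (hobs : (convexHull ℝ (Y : Set (Fin d → ℝ)) ∩ convexHull ℝ ({y1, y2} : Set (Fin d → ℝ))).Nonempty)
    (h1 : y1 ∉ convexHull ℝ (Y : Set (Fin d → ℝ)))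
    (h2 : y2 ∉ convexHull ℝ (Y : Set (Fin d → ℝ)))
    (hmin : ∀ y ∈ Y,
      convexHull ℝ ((Y.erase y : Finset (Fin d → ℝ)) : Set (Fin d → ℝ)) ∩
        convexHull ℝ ({y1, y2} : Set (Fin d → ℝ)) = ∅) :
    ∃ z : Fin d → ℝ,
      convexHull ℝ ({y1, y2} : Set (Fin d → ℝ)) ∩ convexHull ℝ (Y : Set (Fin d → ℝ)) = {z} := by
  classical
  set f : ℝ → (Fin d → ℝ) := fun t => (1 - t) • y1 + t • y2 with hfdef
  have hseg : convexHull ℝ ({y1, y2} : Set (Fin d → ℝ)) = f '' Set.Icc 0 1 := by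
    rw [convexHull_pair, segment_eq_image]
  have hf0 : f 0 = y1 := by simp [hfdef]
  have hf1 : f 1 = y2 := by simp [hfdef]
  have hfinj : Function.Injective f := by
    intro a b h
    simp only [hfdef] at h
    have key : ((1 - a) • y1 + a • y2) - ((1 - b) • y1 + b • y2) = (b - a) • (y1 - y2) := by
      module
    rw [h, sub_self] at key
    rcases smul_eq_zero.mp key.symm with h' | h'
    · linarith [sub_eq_zero.mp h']
    · exact absurd (sub_eq_zero.mp h') hne
  set T : Set ℝ := Set.Icc 0 1 ∩ f ⁻¹' (convexHull ℝ (Y : Set (Fin d → ℝ))) with hTdef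
  have hcont : Continuous f := by fun_prop
  have hYclosed : IsClosed (convexHull ℝ (Y : Set (Fin d → ℝ))) :=
    Y.finite_toSet.isClosed_convexHull (𝕜 := ℝ)
  have hTclosed : IsClosed T := isClosed_Icc.inter (hYclosed.preimage hcont)
  have hTne : T.Nonempty := by
    obtain ⟨x, hx1, hx2⟩ := hobs
    rw [hseg] at hx2
    obtain ⟨t, ht, rfl⟩ := hx2
    exact ⟨t, ht, hx1⟩
  have hTbb : BddBelow T := ⟨0, fun t ht => ht.1.1⟩
  have hTba : BddAbove T := ⟨1, fun t ht => ht.1.2⟩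
  set s := sInf T with hsdef
  set u := sSup T with hudef
  have hsT : s ∈ T := hTclosed.csInf_mem hTne hTbb
  have huT : u ∈ T := hTclosed.csSup_mem hTne hTba
  have hspos : 0 < s := by
    rcases lt_or_eq_of_le hsT.1.1 with h | h
    · exact h
    · exact absurd (show y1 ∈ convexHull ℝ (Y : Set (Fin d → ℝ)) by
        rw [← hf0, h]; exact hsT.2) h1
  -- full support of any representation of f s
  have hpmem : f s ∈ convexHull ℝ (Y : Set (Fin d → ℝ)) := hsT.2
  rw [Finset.convexHull_eq] at hpmem
  obtain ⟨w, hw0, hw1, hwc⟩ := hpmem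
  have hfs_seg : f s ∈ convexHull ℝ ({y1, y2} : Set (Fin d → ℝ)) := by
    rw [hseg]; exact ⟨s, hsT.1, rfl⟩
  have hYne : Y.Nonempty := by
    rcases Y.eq_empty_or_nonempty with h | h
    · exfalso
      have hh : f s ∈ convexHull ℝ ((Y : Finset (Fin d → ℝ)) : Set (Fin d → ℝ)) := hsT.2
      rw [h] at hh
      simp at hh
    · exact h
  have hwpos : ∀ y ∈ Y, 0 < w y := by
    intro y hy
    rcases lt_or_eq_of_le (hw0 y hy) with h | h
    · exact h
    · exfalso
      have hsum' : ∑ z ∈ Y.erase y, w z = 1 := by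
        rw [← Finset.add_sum_erase Y w hy] at hw1; linarith [hw1]
      have hmem : (Y.erase y).centerMass w id ∈
          convexHull ℝ ((Y.erase y : Finset (Fin d → ℝ)) : Set (Fin d → ℝ)) :=
        Finset.centerMass_mem_convexHull _ (fun z hz => hw0 z (Finset.mem_of_mem_erase hz))
          (by rw [hsum']; norm_num) (fun z hz => Finset.mem_coe.mpr hz)
      have hcm : (Y.erase y).centerMass w id = Y.centerMass w id := by
        simp only [Finset.centerMass, hsum', hw1]
        congr 1
        exact Finset.sum_erase _ (by rw [← h]; simp)
      rw [hcm, hwc] at hmem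
      have := hmin y hy
      exact Set.eq_empty_iff_forall_notMem.mp this (f s) ⟨hmem, hfs_seg⟩
  have hsu : s = u := by
    by_contra hsune
    have hsu : s < u := lt_of_le_of_ne (csInf_le_csSup hTne hTbb hTba) hsune
    have hqmem : f u ∈ convexHull ℝ (Y : Set (Fin d → ℝ)) := huT.2
    rw [Finset.convexHull_eq] at hqmem
    obtain ⟨v, hv0, hv1, hvc⟩ := hqmem
    set ε₁ := Y.inf' hYne w with he1
    have he1pos : 0 < ε₁ := (Finset.lt_inf'_iff _).mpr (fun y hy => hwpos y hy)
    set ε := min ε₁ (s / (2 * (u - s))) with hedef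
    have hus : (0:ℝ) < u - s := by linarith
    have hepos : 0 < ε := lt_min he1pos (div_pos hspos (by linarith))
    have hvle1 : ∀ y ∈ Y, v y ≤ 1 := by
      intro y hy
      calc v y ≤ ∑ z ∈ Y, v z := Finset.single_le_sum hv0 hy
        _ = 1 := hv1
    set g : (Fin d → ℝ) → ℝ := fun y => (1 + ε) * w y - ε * v y with hgdef
    have hg0 : ∀ y ∈ Y, 0 ≤ g y := by
      intro y hy
      have h1' : ε ≤ w y := le_trans (min_le_left _ _) (Finset.inf'_le _ hy)
      have h2' : ε * v y ≤ ε := by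
        nlinarith [hvle1 y hy, hv0 y hy, hepos]
      have h3' : 0 ≤ w y := hw0 y hy
      show 0 ≤ (1 + ε) * w y - ε * v y
      nlinarith
    have hg1 : ∑ y ∈ Y, g y = 1 := by
      simp only [hgdef]
      rw [Finset.sum_sub_distrib, ← Finset.mul_sum, ← Finset.mul_sum, hw1, hv1]
      ring
    set t' := s - ε * (u - s) with ht'def
    have ht'pos : 0 < t' := by
      have h4 : ε * (2 * (u - s)) ≤ s :=
        (le_div_iff₀ (by linarith)).mp (min_le_right ε₁ (s / (2 * (u - s))))
      have h5 : ε * (2 * (u - s)) = 2 * (ε * (u - s)) := by ring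
      simp only [ht'def]; linarith
    have ht'lt : t' < s := by
      have : 0 < ε * (u - s) := mul_pos hepos hus
      simp only [ht'def]; linarith
    have ht'Icc : t' ∈ Set.Icc (0:ℝ) 1 := ⟨le_of_lt ht'pos, le_trans (le_of_lt ht'lt) hsT.1.2⟩
    -- f t' ∈ conv Y
    have hfs_eq : ∑ y ∈ Y, w y • y = f s := by
      rw [← hwc, Finset.centerMass_eq_of_sum_1 _ _ hw1]; simp
    have hfu_eq : ∑ y ∈ Y, v y • y = f u := by
      rw [← hvc, Finset.centerMass_eq_of_sum_1 _ _ hv1]; simp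
    have hcm : Y.centerMass g id = f t' := by
      rw [Finset.centerMass_eq_of_sum_1 _ _ hg1]
      have : ∑ y ∈ Y, g y • (id y : Fin d → ℝ) =
          (1 + ε) • (∑ y ∈ Y, w y • y) - ε • (∑ y ∈ Y, v y • y) := by
        rw [Finset.smul_sum, Finset.smul_sum, ← Finset.sum_sub_distrib]
        apply Finset.sum_congr rfl
        intro y _
        simp only [hgdef, id, sub_smul, mul_smul]
      rw [this, hfs_eq, hfu_eq]
      simp only [hfdef, ht'def]
      module
    have ht'T : t' ∈ T := by
      refine ⟨ht'Icc, ?_⟩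
      show f t' ∈ convexHull ℝ (Y : Set (Fin d → ℝ))
      rw [← hcm]
      exact Finset.centerMass_mem_convexHull _ hg0 (by rw [hg1]; norm_num)
        (fun z hz => Finset.mem_coe.mpr hz)
    exact absurd (csInf_le hTbb ht'T) (not_le.mpr ht'lt)
  refine ⟨f s, ?_⟩
  ext x
  constructor
  · rintro ⟨hx1, hx2⟩
    rw [hseg] at hx1
    obtain ⟨t, ht, rfl⟩ := hx1
    have htT : t ∈ T := ⟨ht, hx2⟩
    have : t = s := le_antisymm (hsu ▸ le_csSup hTba htT) (csInf_le hTbb htT)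
    rw [this]; rfl
  · rintro rfl
    exact ⟨hfs_seg, hsT.2⟩
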